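/- If f₁(r) = c₁(r+2)³/r² + c₂(r³+10r²+40r)/(r+2)² with (c₁,c₂) ≠ (0,0), then ∫₀^∞ (f₁'(r))² r² dr = ∞; in particular no nonzero solution of this form has finite Ḣ¹ norm on (0,∞) with measure r² dr. -/

import Mathlib

open MeasureTheory

noncomputable section

def f₁ (c₁ c₂ : ℝ) (r : ℝ) : ℝ :=
  c₁ * (r + 2) ^ 3 / r ^ 2 + c₂ * (r ^ 3 + 10 * r ^ 2 + 40 * r) / (r + 2) ^ 2

lemma hasDerivAt_f₁ (c₁ c₂ : ℝ) {r : ℝ} (hr : 0 < r) :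
    HasDerivAt (f₁ c₁ c₂)
      (c₁ * ((r + 2) ^ 2 * (r - 4)) / r ^ 3 + c₂ * (r ^ 3 + 6 * r ^ 2 + 80) / (r + 2) ^ 3) r := by
  have hr0 : r ≠ 0 := hr.ne'
  have hr2 : r + 2 ≠ 0 := by linarith
  have h1 : HasDerivAt (fun r : ℝ => c₁ * (r + 2) ^ 3) (c₁ * (3 * (r + 2) ^ 2)) r := by
    have := (((hasDerivAt_id r).add_const 2).pow 3).const_mul c₁
    simpa [mul_comm, mul_assoc, mul_left_comm] using this
  have h2 : HasDerivAt (fun r : ℝ => r ^ 2) (2 * r) r := by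
    simpa using hasDerivAt_pow 2 r
  have h3 := h1.div h2 (pow_ne_zero 2 hr0)
  have h4 : HasDerivAt (fun r : ℝ => c₂ * (r ^ 3 + 10 * r ^ 2 + 40 * r))
      (c₂ * (3 * r ^ 2 + 20 * r + 40)) r := by
    have h4a : HasDerivAt (fun r : ℝ => r ^ 3 + 10 * r ^ 2 + 40 * r)
        (3 * r ^ 2 + 20 * r + 40) r := by
      have := ((hasDerivAt_pow 3 r).add (((hasDerivAt_pow 2 r)).const_mul 10)).add
        ((hasDerivAt_id r).const_mul 40)
      refine this.congr_deriv ?_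
      norm_num
      ring
    exact h4a.const_mul c₂
  have h5 : HasDerivAt (fun r : ℝ => (r + 2) ^ 2) (2 * (r + 2)) r := by
    have := ((hasDerivAt_id r).add_const 2).fun_pow 2
    simpa [mul_comm] using this
  have h6 := h4.div h5 (pow_ne_zero 2 hr2)
  have h7 := h3.add h6
  refine h7.congr_deriv ?_
  field_simp
  ring

lemma deriv_f₁ (c₁ c₂ : ℝ) {r : ℝ} (hr : 0 < r) :
    deriv (f₁ c₁ c₂) r
      = c₁ * ((r + 2) ^ 2 * (r - 4)) / r ^ 3 + c₂ * (r ^ 3 + 6 * r ^ 2 + 80) / (r + 2) ^ 3 :=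
  (hasDerivAt_f₁ c₁ c₂ hr).deriv

set_option maxHeartbeats 1000000 in
/-- No nonzero solution of the `j = 1` radial linearized equation has finite
`Ḣ¹((0,∞), r²dr)` seminorm. -/
theorem stmt_11 (c₁ c₂ : ℝ) (h : (c₁, c₂) ≠ (0, 0)) :
    ∫⁻ r in Set.Ioi (0 : ℝ), ENNReal.ofReal ((deriv (f₁ c₁ c₂) r) ^ 2 * r ^ 2) = ⊤ := by
  rcases eq_or_ne c₁ 0 with hc₁ | hc₁
  · -- case c₁ = 0, c₂ ≠ 0 : divergence at infinity
    subst hc₁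
    have hc₂ : c₂ ≠ 0 := by
      intro hc₂; exact h (by simp [hc₂])
    rw [eq_top_iff]
    calc (⊤ : ENNReal) = ENNReal.ofReal (c₂ ^ 2 / 4) * volume (Set.Ioi (1 : ℝ)) := by
          rw [Real.volume_Ioi, ENNReal.mul_top]
          simp only [ne_eq, ENNReal.ofReal_eq_zero, not_le]
          positivity
      _ = ∫⁻ _ in Set.Ioi (1 : ℝ), ENNReal.ofReal (c₂ ^ 2 / 4) := by
          rw [setLIntegral_const]
      _ ≤ ∫⁻ r in Set.Ioi (1 : ℝ),
            ENNReal.ofReal ((deriv (f₁ 0 c₂) r) ^ 2 * r ^ 2) := by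
          apply setLIntegral_mono' measurableSet_Ioi
          intro r hr
          simp only [Set.mem_Ioi] at hr
          have hr0 : 0 < r := by linarith
          apply ENNReal.ofReal_le_ofReal
          rw [deriv_f₁ 0 c₂ hr0]
          have hd : (0 : ℝ) < (r + 2) ^ 3 := by positivity
          have hq : (1 : ℝ) / 2 ≤ (r ^ 3 + 6 * r ^ 2 + 80) / (r + 2) ^ 3 := by
            rw [div_le_div_iff₀ (by norm_num) hd]
            nlinarith [sq_nonneg r, sq_nonneg (r - 1)]
          have hq2 : (r ^ 3 + 6 * r ^ 2 + 80) / (r + 2) ^ 3 ≤ (r ^ 3 + 6 * r ^ 2 + 80) / (r + 2) ^ 3 := le_rfl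
          have hr2 : (1 : ℝ) ≤ r ^ 2 := by nlinarith
          set q := (r ^ 3 + 6 * r ^ 2 + 80) / (r + 2) ^ 3 with hqdef
          have hq4 : (1 : ℝ) / 4 ≤ q ^ 2 := by nlinarith
          have h1 : c₂ ^ 2 / 4 ≤ c₂ ^ 2 * q ^ 2 := by
            nlinarith [mul_le_mul_of_nonneg_left hq4 (sq_nonneg c₂)]
          calc c₂ ^ 2 / 4 ≤ c₂ ^ 2 * q ^ 2 * 1 := by linarith [h1]
            _ ≤ c₂ ^ 2 * q ^ 2 * r ^ 2 := by nlinarith [sq_nonneg (c₂ * q)]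
            _ = (0 * ((r + 2) ^ 2 * (r - 4)) / r ^ 3 + c₂ * (r ^ 3 + 6 * r ^ 2 + 80) / (r + 2) ^ 3) ^ 2 * r ^ 2 := by
                rw [hqdef]; ring
      _ ≤ ∫⁻ r in Set.Ioi (0 : ℝ),
            ENNReal.ofReal ((deriv (f₁ 0 c₂) r) ^ 2 * r ^ 2) :=
          lintegral_mono_set (Set.Ioi_subset_Ioi (by norm_num))
  · -- case c₁ ≠ 0 : divergence at 0
    set ε : ℝ := 6 * |c₁| / (11 * |c₂| + 6 * |c₁|) with hεdef
    have hc₁' : 0 < |c₁| := abs_pos.mpr hc₁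
    have hden : 0 < 11 * |c₂| + 6 * |c₁| := by positivity
    have hε0 : 0 < ε := by positivity
    have hε1 : ε ≤ 1 := by
      rw [hεdef, div_le_one hden]
      have := abs_nonneg c₂
      linarith
    have key : ∀ r ∈ Set.Ioo (0 : ℝ) ε,
        ENNReal.ofReal (36 * c₁ ^ 2 * r⁻¹)
          ≤ ENNReal.ofReal ((deriv (f₁ c₁ c₂) r) ^ 2 * r ^ 2) := by
      intro r hr
      obtain ⟨hr0, hrε⟩ := hr
      have hr1 : r ≤ 1 := le_trans hrε.le hε1
      have hr3 : (0 : ℝ) < r ^ 3 := by positivity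
      apply ENNReal.ofReal_le_ofReal
      rw [deriv_f₁ c₁ c₂ hr0]
      set A := c₁ * ((r + 2) ^ 2 * (r - 4)) / r ^ 3 with hA
      set B := c₂ * (r ^ 3 + 6 * r ^ 2 + 80) / (r + 2) ^ 3 with hB
      have habsA : 12 * |c₁| / r ^ 3 ≤ |A| := by
        rw [hA, abs_div, abs_of_pos hr3, abs_mul]
        apply div_le_div_of_nonneg_right _ hr3.le
        have : |(r + 2) ^ 2 * (r - 4)| = (r + 2) ^ 2 * (4 - r) := by
          rw [abs_mul, abs_of_nonneg (by positivity : (0:ℝ) ≤ (r+2)^2),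
            abs_of_neg (by linarith : r - 4 < 0)]
          ring
        rw [this]
        have h12 : (12 : ℝ) ≤ (r + 2) ^ 2 * (4 - r) := by nlinarith
        calc 12 * |c₁| = |c₁| * 12 := by ring
          _ ≤ |c₁| * ((r + 2) ^ 2 * (4 - r)) := by
              exact mul_le_mul_of_nonneg_left h12 (abs_nonneg c₁)
      have habsB : |B| ≤ 11 * |c₂| := by
        rw [hB, abs_div, abs_mul, abs_of_pos (by positivity : (0:ℝ) < (r + 2) ^ 3),
          abs_of_pos (by positivity : (0:ℝ) < r ^ 3 + 6 * r ^ 2 + 80)]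
        rw [div_le_iff₀ (by positivity : (0:ℝ) < (r + 2) ^ 3)]
        have h8 : (8 : ℝ) ≤ (r + 2) ^ 3 := by nlinarith
        have h87 : r ^ 3 + 6 * r ^ 2 + 80 ≤ 87 := by nlinarith
        nlinarith [abs_nonneg c₂, abs_nonneg c₁]
      have hBsmall : 11 * |c₂| ≤ 6 * |c₁| / r ^ 3 := by
        rw [le_div_iff₀ hr3]
        have hrr : r ^ 3 ≤ r := by nlinarith
        have : r < ε := hrε
        have hre : r * (11 * |c₂| + 6 * |c₁|) ≤ 6 * |c₁| := by
          rw [hεdef] at this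
          have := (lt_div_iff₀ hden).mp this
          linarith
        have h0 : 11 * |c₂| * r ^ 3 ≤ 11 * |c₂| * r := by
          apply mul_le_mul_of_nonneg_left hrr (by positivity)
        nlinarith [abs_nonneg c₂, abs_nonneg c₁, hr0.le]
      have hlow : 6 * |c₁| / r ^ 3 ≤ |A + B| := by
        have h1 : |A| - |B| ≤ |A + B| := by
          have := abs_sub_abs_le_abs_sub A (-B)
          simpa using this
        have h2 : 12 * |c₁| / r ^ 3 - 6 * |c₁| / r ^ 3 = 6 * |c₁| / r ^ 3 := by ring
        linarith
      have hpos : 0 ≤ 6 * |c₁| / r ^ 3 := by positivity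
      have hsq : (6 * |c₁| / r ^ 3) ^ 2 ≤ (A + B) ^ 2 := by
        have := sq_abs (A + B)
        nlinarith [abs_nonneg (A + B)]
      have hstep : 36 * c₁ ^ 2 / r ^ 4 ≤ (A + B) ^ 2 * r ^ 2 := by
        have hexp : (6 * |c₁| / r ^ 3) ^ 2 * r ^ 2 = 36 * c₁ ^ 2 / r ^ 4 := by
          rw [div_pow, mul_pow]
          rw [sq_abs]
          field_simp
          ring
        have := mul_le_mul_of_nonneg_right hsq (by positivity : (0:ℝ) ≤ r ^ 2)
        linarith [hexp ▸ this]
      have hfinal : 36 * c₁ ^ 2 * r⁻¹ ≤ 36 * c₁ ^ 2 / r ^ 4 := by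
        have h4 : r ^ 4 ≤ r := by nlinarith
        have hi : r⁻¹ ≤ (r ^ 4)⁻¹ := inv_anti₀ (by positivity) h4
        rw [div_eq_mul_inv]
        exact mul_le_mul_of_nonneg_left hi (by positivity)
      linarith
    rw [eq_top_iff]
    have hsub : ∫⁻ r in Set.Ioo (0 : ℝ) ε, ENNReal.ofReal (36 * c₁ ^ 2 * r⁻¹) = ⊤ := by
      by_contra hfin
      have hlt : ∫⁻ r in Set.Ioo (0 : ℝ) ε, ENNReal.ofReal (36 * c₁ ^ 2 * r⁻¹) < ⊤ :=
        lt_top_iff_ne_top.mpr hfin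
      have hnn : 0 ≤ᵐ[volume.restrict (Set.Ioo (0:ℝ) ε)] fun r : ℝ => 36 * c₁ ^ 2 * r⁻¹ := by
        filter_upwards [ae_restrict_mem measurableSet_Ioo] with x hx
        have : 0 < x := hx.1
        positivity
      have hint : IntegrableOn (fun r : ℝ => 36 * c₁ ^ 2 * r⁻¹) (Set.Ioo 0 ε) :=
        ⟨(measurable_inv.const_mul (36 * c₁ ^ 2)).aestronglyMeasurable,
          (hasFiniteIntegral_iff_ofReal hnn).2 hlt⟩
      have hint2 : IntegrableOn (fun r : ℝ => r⁻¹) (Set.Ioo 0 ε) := by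
        have := hint.const_mul ((36 * c₁ ^ 2)⁻¹)
        have heq : (fun r : ℝ => (36 * c₁ ^ 2)⁻¹ * (36 * c₁ ^ 2 * r⁻¹)) = fun r : ℝ => r⁻¹ := by
          funext r
          field_simp
        rwa [heq] at this
      have hint3 : IntegrableOn (fun x : ℝ => x ^ (-1 : ℝ)) (Set.Ioo 0 ε) := by
        apply hint2.congr_fun _ measurableSet_Ioo
        intro x hx
        exact (Real.rpow_neg_one x).symm
      have := (intervalIntegral.integrableOn_Ioo_rpow_iff hε0).mp hint3
      exact absurd this (by norm_num)
    calc (⊤ : ENNReal) = ∫⁻ r in Set.Ioo (0 : ℝ) ε, ENNReal.ofReal (36 * c₁ ^ 2 * r⁻¹) :=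
          hsub.symm
      _ ≤ ∫⁻ r in Set.Ioo (0 : ℝ) ε,
            ENNReal.ofReal ((deriv (f₁ c₁ c₂) r) ^ 2 * r ^ 2) :=
          setLIntegral_mono' measurableSet_Ioo key
      _ ≤ ∫⁻ r in Set.Ioi (0 : ℝ),
            ENNReal.ofReal ((deriv (f₁ c₁ c₂) r) ^ 2 * r ^ 2) :=
          lintegral_mono_set (fun x hx => hx.1)
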